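/- Let N be a positive integer, R ≤ N, let κ' = diag(κ'_1,…,κ'_R) and κ'' = diag(κ''_{R+1},…,κ''_N) be diagonal real matrices with strictly positive entries, and set κ = diag(κ',κ''). Let Q₀ be a real (N−R)×R matrix such that for every i ≤ R and j > R, either (Q₀)_{ji} = 0 or κ''_j < κ'_i, and let X₀ be a symmetric real R×R matrix. Define the N×N block matrices C = [[I,0],[Q₀,0]] and D = [[X₀,−Q₀ᵀ],[0,I]], and the matrix-valued function σ(r) = κ^{−1/2}(e^{κr}C + e^{−κr}D). Then there exists r₀ ≥ 0 such that σ(r) is invertible for all r ≥ r₀, and the superpotential U(r) = σ'(r)σ(r)⁻¹ converges, as r → ∞, to the diagonal matrix whose i-th diagonal entry is +κ_i for i = 1,…,R and −κ_i for i = R+1,…,N. -/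

import Mathlib

open Matrix Filter

private lemma expmerge (c a r x : ℝ) (d : ℝ) (h : c + a = d) :
    (Real.exp (c*r) * x) * Real.exp (a*r) = Real.exp (d*r) * x := by
  rw [mul_right_comm, ← Real.exp_add, show c*r + a*r = d*r by rw [← h]; ring]

private lemma tendsto_exp_neg_mul {c : ℝ} (q : ℝ) (hc : c < 0) :
    Tendsto (fun r => Real.exp (c*r) * q) atTop (nhds 0) := by
  have h1 : Tendsto (fun r : ℝ => c * r) atTop atBot :=
    (tendsto_const_mul_atBot_of_neg hc).mpr tendsto_id
  have h2 : Tendsto (fun r : ℝ => Real.exp (c*r)) atTop (nhds 0) :=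
    Real.tendsto_exp_atBot.comp h1
  simpa using h2.mul_const q

private lemma tendsto_matrix_entries {ι₁ ι₂ : Type*} {f : ℝ → Matrix ι₁ ι₂ ℝ} {L : Matrix ι₁ ι₂ ℝ}
    (h : ∀ i j, Tendsto (fun r => f r i j) atTop (nhds (L i j))) :
    Tendsto f atTop (nhds L) := by
  exact tendsto_pi_nhds.mpr fun i => tendsto_pi_nhds.mpr fun j => h i j

private lemma tendsto_matmul {ι : Type*} [Fintype ι] {f g : ℝ → Matrix ι ι ℝ} {A B : Matrix ι ι ℝ}
    (hf : Tendsto f atTop (nhds A)) (hg : Tendsto g atTop (nhds B)) :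
    Tendsto (fun r => f r * g r) atTop (nhds (A * B)) := by
  have hc : Continuous fun p : Matrix ι ι ℝ × Matrix ι ι ℝ => p.1 * p.2 :=
    continuous_fst.matrix_mul continuous_snd
  exact (hc.continuousAt (x := (A, B))).tendsto.comp (hf.prodMk_nhds hg)

private lemma matrix_inv_tendsto_one {ι : Type*} [Fintype ι] [DecidableEq ι]
    {f : ℝ → Matrix ι ι ℝ} (h : Tendsto f atTop (nhds 1)) :
    Tendsto (fun r => (f r)⁻¹) atTop (nhds 1) := by
  have hc : ContinuousAt Inv.inv (1 : Matrix ι ι ℝ) := by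
    apply continuousAt_matrix_inv
    rw [Ring.inverse_eq_inv']
    exact continuousAt_inv₀ (by simp)
  simpa [Function.comp_def] using hc.tendsto.comp h

theorem superpotential_asymptotics_canonical
    (N R : ℕ) (hN : 0 < N) (hR : R ≤ N)
    (κ' : Fin R → ℝ) (κ'' : Fin (N - R) → ℝ)
    (hκ' : ∀ i, 0 < κ' i) (hκ'' : ∀ j, 0 < κ'' j)
    (Q₀ : Matrix (Fin (N - R)) (Fin R) ℝ)
    (hQ₀ : ∀ (i : Fin R) (j : Fin (N - R)), Q₀ j i = 0 ∨ κ'' j < κ' i)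
    (X₀ : Matrix (Fin R) (Fin R) ℝ) (hX₀ : X₀.IsSymm) :
    let κv : Fin R ⊕ Fin (N - R) → ℝ := Sum.elim κ' κ''
    let C : Matrix (Fin R ⊕ Fin (N - R)) (Fin R ⊕ Fin (N - R)) ℝ :=
      fromBlocks 1 0 Q₀ 0
    let D : Matrix (Fin R ⊕ Fin (N - R)) (Fin R ⊕ Fin (N - R)) ℝ :=
      fromBlocks X₀ (-Q₀ᵀ) 0 1
    let σ : ℝ → Matrix (Fin R ⊕ Fin (N - R)) (Fin R ⊕ Fin (N - R)) ℝ := fun r =>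
      diagonal (fun i => (Real.sqrt (κv i))⁻¹) *
        (diagonal (fun i => Real.exp (κv i * r)) * C +
          diagonal (fun i => Real.exp (-(κv i) * r)) * D)
    let σd : ℝ → Matrix (Fin R ⊕ Fin (N - R)) (Fin R ⊕ Fin (N - R)) ℝ := fun r =>
      Matrix.of fun i j => deriv (fun s => σ s i j) r
    ∃ r₀ : ℝ, 0 ≤ r₀ ∧ (∀ r, r₀ ≤ r → IsUnit (σ r)) ∧
      Tendsto (fun r => σd r * (σ r)⁻¹) atTop
        (nhds (diagonal (Sum.elim κ' fun j => -κ'' j))) := by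
  intro κv C D σ σd
  have hκv : ∀ i, 0 < κv i := by rintro (i|j) <;> [exact hκ' i; exact hκ'' j]
  have hκvl : ∀ i, κv (Sum.inl i) = κ' i := fun _ => rfl
  have hκvr : ∀ j, κv (Sum.inr j) = κ'' j := fun _ => rfl
  -- diagonal pieces
  set Kh : Matrix (Fin R ⊕ Fin (N - R)) (Fin R ⊕ Fin (N - R)) ℝ := diagonal (fun i => Real.sqrt (κv i)) with hKh
  set Kih : Matrix (Fin R ⊕ Fin (N - R)) (Fin R ⊕ Fin (N - R)) ℝ := diagonal (fun i => (Real.sqrt (κv i))⁻¹) with hKih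
  set εκ : (Fin R ⊕ Fin (N - R)) → ℝ := Sum.elim κ' (fun j => -κ'' j) with hεκ
  set A : ℝ → Matrix (Fin R ⊕ Fin (N - R)) (Fin R ⊕ Fin (N - R)) ℝ := fun r => diagonal (fun i => Real.exp (εκ i * r)) with hA
  set S : Matrix (Fin R ⊕ Fin (N - R)) (Fin R ⊕ Fin (N - R)) ℝ := diagonal (Sum.elim (fun _ => (1:ℝ)) (fun _ => (-1:ℝ))) with hS
  set B : ℝ → Matrix (Fin R ⊕ Fin (N - R)) (Fin R ⊕ Fin (N - R)) ℝ := fun r => fromBlocks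
      (Matrix.of fun i i' => Real.exp (-(κ' i + κ' i')*r) * X₀ i i')
      (Matrix.of fun i j => -(Real.exp ((κ'' j - κ' i)*r) * Q₀ j i))
      (Matrix.of fun j i => Real.exp ((κ'' j - κ' i)*r) * Q₀ j i) 0 with hB
  set B' : ℝ → Matrix (Fin R ⊕ Fin (N - R)) (Fin R ⊕ Fin (N - R)) ℝ := fun r => fromBlocks
      (Matrix.of fun i i' => -(Real.exp (-(κ' i + κ' i')*r) * X₀ i i'))
      (Matrix.of fun i j => Real.exp ((κ'' j - κ' i)*r) * Q₀ j i)
      (Matrix.of fun j i => Real.exp ((κ'' j - κ' i)*r) * Q₀ j i) 0 with hB'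
  -- key entrywise identities
  have key : ∀ (r : ℝ) (i j : Fin R ⊕ Fin (N - R)),
      Real.exp (κv i * r) * C i j + Real.exp (-(κv i) * r) * D i j
        = (1 + B r) i j * Real.exp (εκ j * r) := by
    intro r i j
    rcases i with i | i <;> rcases j with j | j <;>
      simp only [hB, hεκ, κv, C, D, Sum.elim_inl, Sum.elim_inr, Matrix.add_apply,
        Matrix.fromBlocks_apply₁₁, Matrix.fromBlocks_apply₁₂, Matrix.fromBlocks_apply₂₁,
        Matrix.fromBlocks_apply₂₂, Matrix.of_apply, Matrix.zero_apply, Matrix.neg_apply,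
        Matrix.transpose_apply, Matrix.one_apply, Sum.inl.injEq, Sum.inr.injEq,
        reduceCtorEq, if_false, mul_zero, zero_mul, add_zero, zero_add] <;>
      try split_ifs with h <;> try subst h
    all_goals
      simp only [neg_mul, add_mul, sub_mul, Real.exp_add, Real.exp_sub, Real.exp_neg,
        one_mul, mul_one, zero_mul, mul_zero, add_zero, zero_add, sub_zero, zero_sub]
    all_goals try field_simp
    all_goals try ring_nf
    all_goals try simp
  have key' : ∀ (r : ℝ) (i j : Fin R ⊕ Fin (N - R)),
      Real.exp (κv i * r) * C i j - Real.exp (-(κv i) * r) * D i j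
        = (S + B' r) i j * Real.exp (εκ j * r) := by
    intro r i j
    rcases i with i | i <;> rcases j with j | j <;>
      simp only [hB', hS, hεκ, κv, C, D, Sum.elim_inl, Sum.elim_inr, Matrix.add_apply,
        Matrix.diagonal_apply, Matrix.fromBlocks_apply₁₁, Matrix.fromBlocks_apply₁₂,
        Matrix.fromBlocks_apply₂₁, Matrix.fromBlocks_apply₂₂, Matrix.of_apply,
        Matrix.zero_apply, Matrix.neg_apply, Matrix.transpose_apply, Matrix.one_apply,
        Sum.inl.injEq, Sum.inr.injEq, reduceCtorEq, if_false,
        mul_zero, zero_mul, add_zero, zero_add] <;>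
      try split_ifs with h <;> try subst h
    all_goals
      simp only [neg_mul, add_mul, sub_mul, Real.exp_add, Real.exp_sub, Real.exp_neg,
        one_mul, mul_one, zero_mul, mul_zero, add_zero, zero_add, sub_zero, zero_sub]
    all_goals try field_simp
    all_goals try ring_nf
    all_goals try simp
  -- entry formula for σ
  have hσentry : ∀ (s : ℝ) (i j : Fin R ⊕ Fin (N - R)),
      σ s i j = (Real.sqrt (κv i))⁻¹ *
        (Real.exp (κv i * s) * C i j + Real.exp (-(κv i) * s) * D i j) := by
    intro s i j
    show (diagonal (fun i => (Real.sqrt (κv i))⁻¹) *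
        (diagonal (fun i => Real.exp (κv i * s)) * C +
          diagonal (fun i => Real.exp (-(κv i) * s)) * D)) i j = _
    rw [Matrix.diagonal_mul, Matrix.add_apply, Matrix.diagonal_mul, Matrix.diagonal_mul]
  -- factorizations
  have hσfac : ∀ r, σ r = Kih * ((1 + B r) * A r) := by
    intro r
    ext i j
    rw [hσentry, hKih, Matrix.diagonal_mul, hA, Matrix.mul_diagonal, key r i j]
  have hσdfac : ∀ r, σd r = Kh * ((S + B' r) * A r) := by
    intro r
    ext i j
    show deriv (fun s => σ s i j) r = _
    have hd : HasDerivAt (fun s => σ s i j)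
        ((Real.sqrt (κv i))⁻¹ *
          ((κv i * Real.exp (κv i * r)) * C i j +
            ((-(κv i)) * Real.exp (-(κv i) * r)) * D i j)) r := by
      have h1 : HasDerivAt (fun s : ℝ => Real.exp (κv i * s)) (κv i * Real.exp (κv i * r)) r := by
        simpa [mul_comm] using (((hasDerivAt_id r).const_mul (κv i)).exp)
      have h2 : HasDerivAt (fun s : ℝ => Real.exp (-(κv i) * s))
          ((-(κv i)) * Real.exp (-(κv i) * r)) r := by
        simpa [mul_comm] using (((hasDerivAt_id r).const_mul (-(κv i))).exp)
      have h3 := (((h1.mul_const (C i j)).add (h2.mul_const (D i j))).const_mul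
        ((Real.sqrt (κv i))⁻¹))
      refine HasDerivAt.congr_of_eventuallyEq h3 ?_
      filter_upwards with s
      rw [hσentry]; rfl
    rw [hd.deriv, hKh, Matrix.diagonal_mul, hA, Matrix.mul_diagonal, ← key' r i j]
    have hsq : (Real.sqrt (κv i))⁻¹ * κv i = Real.sqrt (κv i) := by
      have hne : Real.sqrt (κv i) ≠ 0 := (Real.sqrt_pos.mpr (hκv i)).ne'
      field_simp
      rw [Real.sq_sqrt (hκv i).le]
    calc (Real.sqrt (κv i))⁻¹ *
          ((κv i * Real.exp (κv i * r)) * C i j + ((-(κv i)) * Real.exp (-(κv i) * r)) * D i j)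
        = ((Real.sqrt (κv i))⁻¹ * κv i) *
            (Real.exp (κv i * r) * C i j - Real.exp (-(κv i) * r) * D i j) := by ring
      _ = Real.sqrt (κv i) * (Real.exp (κv i * r) * C i j - Real.exp (-(κv i) * r) * D i j) := by
          rw [hsq]
  -- limits of B, B'
  have hQlim : ∀ (i : Fin R) (j : Fin (N - R)),
      Tendsto (fun r => Real.exp ((κ'' j - κ' i) * r) * Q₀ j i) atTop (nhds 0) := by
    intro i j
    rcases hQ₀ i j with h | h
    · simp only [h, mul_zero]
      exact tendsto_const_nhds
    · exact tendsto_exp_neg_mul _ (by linarith)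
  have hBlim : Tendsto B atTop (nhds 0) := by
    apply tendsto_matrix_entries
    rintro (i | i) (j | j) <;>
      simp only [hB, Matrix.fromBlocks_apply₁₁, Matrix.fromBlocks_apply₁₂,
        Matrix.fromBlocks_apply₂₁, Matrix.fromBlocks_apply₂₂, Matrix.of_apply,
        Matrix.zero_apply]
    · exact tendsto_exp_neg_mul _ (by have := hκ' i; have := hκ' j; linarith)
    · simpa using (hQlim i j).neg
    · exact hQlim j i
    · exact tendsto_const_nhds
  have hB'lim : Tendsto B' atTop (nhds 0) := by
    apply tendsto_matrix_entries
    rintro (i | i) (j | j) <;>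
      simp only [hB', Matrix.fromBlocks_apply₁₁, Matrix.fromBlocks_apply₁₂,
        Matrix.fromBlocks_apply₂₁, Matrix.fromBlocks_apply₂₂, Matrix.of_apply,
        Matrix.zero_apply]
    · simpa using (tendsto_exp_neg_mul (X₀ i j) (show -(κ' i + κ' j) < 0 by
        have := hκ' i; have := hκ' j; linarith)).neg
    · exact hQlim i j
    · exact hQlim j i
    · exact tendsto_const_nhds
  have h1lim : Tendsto (fun r => 1 + B r) atTop (nhds 1) := by
    simpa using tendsto_const_nhds.add hBlim
  have hdetlim : Tendsto (fun r => (1 + B r).det) atTop (nhds 1) := by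
    simpa [Function.comp_def] using (continuous_id.matrix_det.continuousAt (x := (1 : Matrix (Fin R ⊕ Fin (N - R)) (Fin R ⊕ Fin (N - R)) ℝ))).tendsto.comp h1lim
  have hev : ∀ᶠ r in atTop, (1 + B r).det ≠ 0 := hdetlim.eventually_ne one_ne_zero
  obtain ⟨r₁, hr₁⟩ := eventually_atTop.mp hev
  -- units
  have hKihU : IsUnit Kih := by
    rw [Matrix.isUnit_iff_isUnit_det, hKih, Matrix.det_diagonal, isUnit_iff_ne_zero]
    exact Finset.prod_ne_zero_iff.mpr fun i _ => inv_ne_zero (Real.sqrt_pos.mpr (hκv i)).ne'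
  have hAU : ∀ r, IsUnit (A r) := by
    intro r
    rw [Matrix.isUnit_iff_isUnit_det, hA, Matrix.det_diagonal, isUnit_iff_ne_zero]
    exact Finset.prod_ne_zero_iff.mpr fun i _ => Real.exp_ne_zero _
  refine ⟨max r₁ 0, le_max_right _ _, ?_, ?_⟩
  · intro r hr
    have hdet : (1 + B r).det ≠ 0 := hr₁ r (le_trans (le_max_left _ _) hr)
    rw [hσfac r]
    exact hKihU.mul ((Matrix.isUnit_iff_isUnit_det _ |>.mpr (isUnit_iff_ne_zero.mpr hdet)).mul (hAU r))
  · -- main limit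
    have hKihinv : Kih⁻¹ = Kh := by
      apply Matrix.inv_eq_right_inv
      have h1 : (fun i => (Real.sqrt (κv i))⁻¹ * Real.sqrt (κv i)) = fun _ => (1:ℝ) :=
        funext fun i => inv_mul_cancel₀ (Real.sqrt_pos.mpr (hκv i)).ne'
      rw [hKih, hKh, Matrix.diagonal_mul_diagonal, h1, Matrix.diagonal_one]
    have hUeq : ∀ᶠ r in atTop, Kh * ((S + B' r) * ((1 + B r)⁻¹ * Kh)) = σd r * (σ r)⁻¹ := by
      filter_upwards [eventually_ge_atTop r₁] with r hr
      have hdet : (1 + B r).det ≠ 0 := hr₁ r hr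
      rw [hσdfac r, hσfac r, Matrix.mul_inv_rev, Matrix.mul_inv_rev, hKihinv]
      have hAA : A r * ((A r)⁻¹ * ((1 + B r)⁻¹ * Kh)) = (1 + B r)⁻¹ * Kh := by
        rw [← Matrix.mul_assoc, Matrix.mul_nonsing_inv _ ((Matrix.isUnit_iff_isUnit_det _).mp (hAU r)), Matrix.one_mul]
      simp only [Matrix.mul_assoc]
      rw [hAA]
    apply Tendsto.congr' hUeq
    have hSlim : Tendsto (fun r => S + B' r) atTop (nhds S) := by
      simpa using tendsto_const_nhds.add hB'lim
    have hinvlim : Tendsto (fun r => (1 + B r)⁻¹) atTop (nhds 1) := matrix_inv_tendsto_one h1lim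
    have hmain := tendsto_matmul (tendsto_const_nhds (x := Kh))
      (tendsto_matmul hSlim (tendsto_matmul hinvlim (tendsto_const_nhds (x := Kh))))
    have hfinal : Kh * (S * ((1 : Matrix (Fin R ⊕ Fin (N - R)) (Fin R ⊕ Fin (N - R)) ℝ) * Kh))
        = diagonal εκ := by
      rw [Matrix.one_mul, hKh, hS, Matrix.diagonal_mul_diagonal, Matrix.diagonal_mul_diagonal,
        hεκ]
      refine congrArg diagonal (funext fun i => ?_)
      rcases i with i | j
      · simp [hκvl, Real.mul_self_sqrt (hκ' i).le]
      · simp [hκvr, Real.mul_self_sqrt (hκ'' j).le]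
    rw [hfinal] at hmain
    exact hmain
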